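/- arXiv:2001.11990 — 5 statements merged into one kernel-verified Lean document; each statement's English description precedes it below -/
import Mathlib

section
/- Let 𝒳 and 𝒵 be finite sets with 𝒵 ⊆ ℝ, let f : 𝒳 × 𝒵 → ℝ, and let z_(1) ≤ ... ≤ z_(m) enumerate 𝒵 in nondecreasing order. Let f̃ : 𝒳 × 𝒵 → ℝ be a function that minimizes ||f − f'||² = Σ_{x ∈ 𝒳, z ∈ 𝒵} (f(x,z) − f'(x,z))² over all functions f' : 𝒳 × 𝒵 → ℝ satisfying the monotonicity constraints f'(x, j) ≤ f'(x, k) for all x ∈ 𝒳 and all j, k ∈ 𝒵 with j ≤ k. Then for every x ∈ 𝒳, f̃(x, z_(1)) ≤ f(x, z_(1)) and f̃(x, z_(m)) ≥ f(x, z_(m)). -/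
private lemma aux_sum_lt {𝒳 : Type*} [Fintype 𝒳]
    (Z : Finset ℝ) (f ftil g : 𝒳 → ℝ → ℝ)
    (x0 : 𝒳) (z0 : ℝ) (hz0 : z0 ∈ Z)
    (hne : ftil x0 z0 ≠ f x0 z0)
    (hg1 : g x0 z0 = f x0 z0)
    (hg2 : ∀ x z, ¬(x = x0 ∧ z = z0) → g x z = ftil x z) :
    (∑ x : 𝒳, ∑ z ∈ Z, (f x z - g x z) ^ 2)
      < ∑ x : 𝒳, ∑ z ∈ Z, (f x z - ftil x z) ^ 2 := by
  have key : ∀ x : 𝒳, ∀ z ∈ Z, (f x z - g x z) ^ 2 ≤ (f x z - ftil x z) ^ 2 := by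
    intro x z _
    by_cases h : x = x0 ∧ z = z0
    · obtain ⟨rfl, rfl⟩ := h
      rw [hg1]
      simp [sq_nonneg]
    · rw [hg2 x z h]
  apply Finset.sum_lt_sum
  · intro x _
    exact Finset.sum_le_sum (key x)
  · refine ⟨x0, Finset.mem_univ x0, ?_⟩
    apply Finset.sum_lt_sum (key x0)
    refine ⟨z0, hz0, ?_⟩
    rw [hg1]
    have hne' : f x0 z0 - ftil x0 z0 ≠ 0 := sub_ne_zero.mpr (Ne.symm hne)
    have h2 : (0:ℝ) < (f x0 z0 - ftil x0 z0) ^ 2 := by positivity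
    simpa using h2

/-- If `ftil` is a least-squares projection of `f` onto the functions on `𝒳 × 𝒵`
(`𝒳` finite, `𝒵 ⊆ ℝ` a finite set) that are monotonically nondecreasing in the second
argument, then at the smallest element of `𝒵` the projection does not exceed `f`, and at
the largest element of `𝒵` it is at least `f`, pointwise in `x`. -/
theorem monotone_projection_endpoints
    {𝒳 : Type*} [Fintype 𝒳]
    (Z : Finset ℝ) (hZ : Z.Nonempty)
    (f ftil : 𝒳 → ℝ → ℝ)
    (hmono : ∀ x : 𝒳, ∀ j ∈ Z, ∀ k ∈ Z, j ≤ k → ftil x j ≤ ftil x k)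
    (hmin : ∀ g : 𝒳 → ℝ → ℝ,
      (∀ x : 𝒳, ∀ j ∈ Z, ∀ k ∈ Z, j ≤ k → g x j ≤ g x k) →
      (∑ x : 𝒳, ∑ z ∈ Z, (f x z - ftil x z) ^ 2)
        ≤ ∑ x : 𝒳, ∑ z ∈ Z, (f x z - g x z) ^ 2) :
    ∀ x : 𝒳, ftil x (Z.min' hZ) ≤ f x (Z.min' hZ)
      ∧ f x (Z.max' hZ) ≤ ftil x (Z.max' hZ) := by
  classical
  intro x0
  constructor
  · by_contra hc
    push_neg at hc
    set z0 := Z.min' hZ with hz0def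
    have hz0 : z0 ∈ Z := Z.min'_mem hZ
    set g : 𝒳 → ℝ → ℝ := fun x z => if x = x0 ∧ z = z0 then f x0 z0 else ftil x z with hgdef
    have hgmono : ∀ x : 𝒳, ∀ j ∈ Z, ∀ k ∈ Z, j ≤ k → g x j ≤ g x k := by
      intro x j hj k hk hjk
      simp only [hgdef]
      by_cases hjc : x = x0 ∧ j = z0
      · rw [if_pos hjc]
        by_cases hkc : k = z0
        · rw [if_pos ⟨hjc.1, hkc⟩]
        · rw [if_neg (by rintro ⟨_, h⟩; exact hkc h), hjc.1]
          have hjk' : z0 ≤ k := hjc.2 ▸ hjk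
          exact le_of_lt (lt_of_lt_of_le hc (hmono x0 z0 hz0 k hk hjk'))
      · have hk' : ¬(x = x0 ∧ k = z0) := by
          rintro ⟨hx, hk2⟩
          exact hjc ⟨hx, le_antisymm (hk2 ▸ hjk) (Z.min'_le j hj)⟩
        rw [if_neg hjc, if_neg hk']
        exact hmono x j hj k hk hjk
    have hlt := aux_sum_lt Z f ftil g x0 z0 hz0 (ne_of_gt hc) (by simp [hgdef])
      (fun x z h => by simp [hgdef, if_neg h])
    exact absurd (hmin g hgmono) (not_le.mpr hlt)
  · by_contra hc
    push_neg at hc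
    set z0 := Z.max' hZ with hz0def
    have hz0 : z0 ∈ Z := Z.max'_mem hZ
    set g : 𝒳 → ℝ → ℝ := fun x z => if x = x0 ∧ z = z0 then f x0 z0 else ftil x z with hgdef
    have hgmono : ∀ x : 𝒳, ∀ j ∈ Z, ∀ k ∈ Z, j ≤ k → g x j ≤ g x k := by
      intro x j hj k hk hjk
      simp only [hgdef]
      by_cases hkc : x = x0 ∧ k = z0
      · rw [if_pos hkc]
        by_cases hjc : j = z0
        · rw [if_pos ⟨hkc.1, hjc⟩]
        · rw [if_neg (by rintro ⟨_, h⟩; exact hjc h), hkc.1]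
          have hjk' : j ≤ z0 := hkc.2 ▸ hjk
          exact le_of_lt (lt_of_le_of_lt (hmono x0 j hj z0 hz0 hjk') hc)
      · have hj' : ¬(x = x0 ∧ j = z0) := by
          rintro ⟨hx, hj2⟩
          exact hkc ⟨hx, le_antisymm (Z.le_max' k hk) (hj2 ▸ hjk)⟩
        rw [if_neg hj', if_neg hkc]
        exact hmono x j hj k hk hjk
    have hlt := aux_sum_lt Z f ftil g x0 z0 hz0 (ne_of_lt hc) (by simp [hgdef])
      (fun x z h => by simp [hgdef, if_neg h])
    exact absurd (hmin g hgmono) (not_le.mpr hlt)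
end

section
/- Let 𝒳 and 𝒵 be finite sets with 𝒵 ⊆ ℝ, let f : 𝒳 × 𝒵 → ℝ, and let z_(1) ≤ ... ≤ z_(m) enumerate 𝒵 in nondecreasing order. Let p : 𝒳 × 𝒵 → [0,1] assign conditional probabilities P(X = x | Z = z) with Σ_{x ∈ 𝒳} p(x, z) = 1 for each z, and define E[g(X,Z) | Z = z] = Σ_{x ∈ 𝒳} g(x, z) p(x, z) for any g : 𝒳 × 𝒵 → ℝ. Define the average statistical parity violation R_g = (1/m) Σ_{i=1}^{m-1} ( E[g(X,Z) | Z = z_(i)] − E[g(X,Z) | Z = z_(i+1)] ). Let f̃ be a minimizer of Σ_{x,z} (f(x,z) − f'(x,z))² over all f' : 𝒳 × 𝒵 → ℝ satisfying f'(x, j) ≤ f'(x, k) for all x ∈ 𝒳 and all j ≤ k in 𝒵. Then R_{f̃} ≤ R_f. -/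
private lemma telescope_fin' {n : ℕ} (G : Fin (n+1) → ℝ) :
    ∑ i : Fin n, (G i.castSucc - G i.succ) = G 0 - G (Fin.last n) := by
  induction n with
  | zero => simp
  | succ m ih =>
    rw [Fin.sum_univ_castSucc]
    have h1 : ∀ j : Fin m, G j.castSucc.castSucc - G j.castSucc.succ
        = (G ∘ Fin.castSucc) j.castSucc - (G ∘ Fin.castSucc) j.succ := by
      intro j
      simp [Function.comp, Fin.succ_castSucc, -Fin.castSucc_succ]
    rw [Finset.sum_congr rfl (fun j _ => h1 j), ih (G ∘ Fin.castSucc)]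
    simp [Function.comp, Fin.succ_last]

/-- Lemma 2: the least-squares projection `ftil` of `f` onto the class of functions
monotonically nondecreasing in the protected attribute `Z` cannot have a worse *average*
one-sided statistical parity violation than `f`.  Here `z 0 < z 1 < ... < z n` enumerates
the `m = n + 1` elements of `𝒵 ⊆ ℝ` in nondecreasing order,
`p x (z i) = P(X = x | Z = z i)` are conditional probabilities summing to one for each
group, `E[g(X,Z) | Z = z] = ∑ x, g x z * p x z`, and
`R_g = (1/m) ∑_{i=1}^{m-1} (E[g|Z=z_(i)] - E[g|Z=z_(i+1)])`. -/
theorem monotone_projection_average_parity_violation_le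
    {𝒳 : Type*} [Fintype 𝒳]
    (n : ℕ) (z : Fin (n + 1) → ℝ) (hz : StrictMono z)
    (p : 𝒳 → ℝ → ℝ)
    (hp0 : ∀ (x : 𝒳) (i : Fin (n + 1)), 0 ≤ p x (z i))
    (hp1 : ∀ (x : 𝒳) (i : Fin (n + 1)), p x (z i) ≤ 1)
    (hpsum : ∀ i : Fin (n + 1), ∑ x : 𝒳, p x (z i) = 1)
    (f ftil : 𝒳 → ℝ → ℝ)
    (hmono : ∀ (x : 𝒳) (i j : Fin (n + 1)), i ≤ j → ftil x (z i) ≤ ftil x (z j))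
    (hmin : ∀ g : 𝒳 → ℝ → ℝ,
      (∀ (x : 𝒳) (i j : Fin (n + 1)), i ≤ j → g x (z i) ≤ g x (z j)) →
      (∑ x : 𝒳, ∑ i : Fin (n + 1), (f x (z i) - ftil x (z i)) ^ 2)
        ≤ ∑ x : 𝒳, ∑ i : Fin (n + 1), (f x (z i) - g x (z i)) ^ 2) :
    (1 / (n + 1 : ℝ)) * ∑ i : Fin n,
        ((∑ x : 𝒳, ftil x (z i.castSucc) * p x (z i.castSucc))
          - ∑ x : 𝒳, ftil x (z i.succ) * p x (z i.succ))
      ≤ (1 / (n + 1 : ℝ)) * ∑ i : Fin n,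
        ((∑ x : 𝒳, f x (z i.castSucc) * p x (z i.castSucc))
          - ∑ x : 𝒳, f x (z i.succ) * p x (z i.succ)) := by
  set F : (𝒳 → ℝ → ℝ) → Fin (n+1) → ℝ :=
    fun g j => ∑ x : 𝒳, g x (z j) * p x (z j) with hF
  have key : F ftil 0 - F ftil (Fin.last n) ≤ F f 0 - F f (Fin.last n) := by
    rcases Nat.eq_zero_or_pos n with hn | hn
    · subst hn; simp
    -- n ≥ 1 case
    have h0l : (0 : Fin (n+1)) < Fin.last n := by
      rw [Fin.lt_def]; simpa using hn
    have hzne : z 0 ≠ z (Fin.last n) := ne_of_lt (hz h0l)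
    set h : 𝒳 → ℝ → ℝ := fun x r =>
      if r = z 0 then -p x (z 0)
      else if r = z (Fin.last n) then p x (z (Fin.last n)) else 0 with hh
    have hval0 : ∀ x, h x (z 0) = -p x (z 0) := by intro x; simp [hh]
    have hvall : ∀ x, h x (z (Fin.last n)) = p x (z (Fin.last n)) := by
      intro x; simp [hh, hzne.symm]
    have hvalmid : ∀ x (i : Fin (n+1)), i ≠ 0 → i ≠ Fin.last n → h x (z i) = 0 := by
      intro x i h0 hl
      have e0 : z i ≠ z 0 := fun hc => h0 (hz.injective hc)
      have el : z i ≠ z (Fin.last n) := fun hc => hl (hz.injective hc)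
      simp [hh, e0, el]
    -- monotonicity of h along the chain
    have hmonoh : ∀ x (i j : Fin (n+1)), i ≤ j → h x (z i) ≤ h x (z j) := by
      intro x i j hij
      by_cases hi0 : i = 0
      · subst hi0
        rw [hval0]
        by_cases hj0 : j = 0
        · subst hj0; rw [hval0]
        · by_cases hjl : j = Fin.last n
          · subst hjl; rw [hvall]
            have := hp0 x 0; have := hp0 x (Fin.last n); linarith
          · rw [hvalmid x j hj0 hjl]
            have := hp0 x 0; linarith
      · by_cases hil : i = Fin.last n
        · subst hil
          have : j = Fin.last n := le_antisymm (Fin.le_last j) hij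
          subst this; rw [hvall]
        · rw [hvalmid x i hi0 hil]
          have hj0 : j ≠ 0 := by
            intro hc; subst hc
            exact hi0 (le_antisymm (by simpa using hij) (Fin.zero_le i))
          by_cases hjl : j = Fin.last n
          · subst hjl; rw [hvall]; exact hp0 x (Fin.last n)
          · rw [hvalmid x j hj0 hjl]
    set S : ℝ := ∑ x : 𝒳, ∑ i : Fin (n+1), (f x (z i) - ftil x (z i)) * h x (z i) with hS
    set H : ℝ := ∑ x : 𝒳, ∑ i : Fin (n+1), (h x (z i)) ^ 2 with hH
    have hHnn : 0 ≤ H := by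
      apply Finset.sum_nonneg; intro x _
      apply Finset.sum_nonneg; intro i _
      positivity
    -- S ≤ 0 by the variational argument
    have hSle : S ≤ 0 := by
      by_contra hpos
      push_neg at hpos
      set t : ℝ := S / (H + 1) with ht
      have htpos : 0 < t := div_pos hpos (by linarith)
      set g : 𝒳 → ℝ → ℝ := fun x r => ftil x r + t * h x r with hg
      have hgmono : ∀ (x : 𝒳) (i j : Fin (n+1)), i ≤ j → g x (z i) ≤ g x (z j) := by
        intro x i j hij
        have h1 := hmono x i j hij
        have h2 := hmonoh x i j hij
        simp only [hg]
        nlinarith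
      have hmin' := hmin g hgmono
      have expand : ∀ (x : 𝒳) (i : Fin (n+1)),
          (f x (z i) - g x (z i)) ^ 2
            = (f x (z i) - ftil x (z i)) ^ 2
              - 2 * t * ((f x (z i) - ftil x (z i)) * h x (z i))
              + t ^ 2 * (h x (z i)) ^ 2 := by
        intro x i; simp only [hg]; ring
      have hsum : (∑ x : 𝒳, ∑ i : Fin (n+1), (f x (z i) - g x (z i)) ^ 2)
          = (∑ x : 𝒳, ∑ i : Fin (n+1), (f x (z i) - ftil x (z i)) ^ 2)
            - 2 * t * S + t ^ 2 * H := by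
        rw [hS, hH]
        rw [Finset.sum_congr rfl (fun x _ => Finset.sum_congr rfl (fun i _ => expand x i))]
        simp only [Finset.sum_add_distrib, Finset.sum_sub_distrib, Finset.mul_sum]
      rw [hsum] at hmin'
      have h1 : 2 * t * S ≤ t ^ 2 * H := by linarith
      have h2 : t * H ≤ S := by
        rw [ht]
        rw [div_mul_eq_mul_div, div_le_iff₀ (by linarith)]
        nlinarith
      nlinarith
    -- compute S explicitly
    have hSval : S = ∑ x : 𝒳,
        ((f x (z (Fin.last n)) - ftil x (z (Fin.last n))) * p x (z (Fin.last n))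
          - (f x (z 0) - ftil x (z 0)) * p x (z 0)) := by
      rw [hS]
      apply Finset.sum_congr rfl
      intro x _
      have hsub : ({0, Fin.last n} : Finset (Fin (n+1))) ⊆ Finset.univ := by
        simp
      rw [← Finset.sum_subset hsub]
      · rw [Finset.sum_pair (ne_of_lt h0l)]
        rw [hval0 x, hvall x]; ring
      · intro i _ hi
        simp only [Finset.mem_insert, Finset.mem_singleton] at hi
        push_neg at hi
        rw [hvalmid x i hi.1 hi.2]; ring
    rw [hSval, Finset.sum_sub_distrib] at hSle
    simp only [hF]
    simp only [sub_mul, Finset.sum_sub_distrib] at hSle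
    linarith
  -- telescoping
  apply mul_le_mul_of_nonneg_left _ (by positivity : (0:ℝ) ≤ 1 / (n + 1 : ℝ))
  calc ∑ i : Fin n, ((∑ x : 𝒳, ftil x (z i.castSucc) * p x (z i.castSucc))
          - ∑ x : 𝒳, ftil x (z i.succ) * p x (z i.succ))
      = F ftil 0 - F ftil (Fin.last n) := telescope_fin' (F ftil)
    _ ≤ F f 0 - F f (Fin.last n) := key
    _ = ∑ i : Fin n, ((∑ x : 𝒳, f x (z i.castSucc) * p x (z i.castSucc))
          - ∑ x : 𝒳, f x (z i.succ) * p x (z i.succ)) := (telescope_fin' (F f)).symm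
end

section
/- Let (Ω, F, P) be a probability space with P a probability measure on a finite (or countable) sample space, and let X : Ω → 𝒳, Z : Ω → 𝒵, Ŷ : Ω → {0,1} be random variables with 𝒳, 𝒵 finite. Fix j, k ∈ 𝒵 and a nonempty set S ⊆ 𝒳 such that for all x ∈ S and z ∈ {j, k}, P(X = x, Ŷ = 1, Z = z) > 0. Suppose that for every x ∈ S, P(Ŷ = 1 | X = x, Z = j) ≤ P(Ŷ = 1 | X = x, Z = k). Then for every x ∈ S, P(Ŷ = 1 | Z = j) · P(X = x | Z = k) · P(X = x | Ŷ = 1, Z = j) ≤ P(Ŷ = 1 | Z = k) · P(X = x | Z = j) · P(X = x | Ŷ = 1, Z = k); equivalently, P(Ŷ = 1 | Z = j) / P(Ŷ = 1 | Z = k) ≤ inf over x ∈ S of [ P(X = x | Z = j) · P(X = x | Ŷ = 1, Z = k) ] / [ P(X = x | Z = k) · P(X = x | Ŷ = 1, Z = j) ]. -/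
/- Probability of the event `A` under the probability mass function `P` on a finite
sample space `Ω`. -/
open Classical in
noncomputable def pr {Ω : Type*} [Fintype Ω] (P : Ω → ℝ) (A : Ω → Prop) : ℝ :=
  ∑ ω : Ω, if A ω then P ω else 0

/-- Conditional probability `P(B | A)` under the probability mass function `P`. -/
noncomputable def condPr {Ω : Type*} [Fintype Ω] (P : Ω → ℝ) (A B : Ω → Prop) : ℝ :=
  pr P (fun ω => A ω ∧ B ω) / pr P A

open Classical in
private lemma pr_congr' {Ω : Type*} [Fintype Ω] (P : Ω → ℝ) {A B : Ω → Prop}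
    (h : ∀ ω, A ω ↔ B ω) : pr P A = pr P B := by
  unfold pr
  apply Finset.sum_congr rfl
  intro ω _
  exact if_congr (h ω) rfl rfl

private lemma pr_mono' {Ω : Type*} [Fintype Ω] (P : Ω → ℝ) (hP0 : ∀ ω, 0 ≤ P ω)
    {A B : Ω → Prop} (h : ∀ ω, A ω → B ω) : pr P A ≤ pr P B := by
  unfold pr
  apply Finset.sum_le_sum
  intro ω _
  by_cases hA : A ω
  · simp [hA, h ω hA]
  · simp only [hA, if_false]
    split <;> [exact hP0 ω; exact le_rfl]

/-- Lemma 3: for a binary classifier `Ŷ` that is monotonic between the groups `Z = j` and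
`Z = k` on a set `S` of feature values with positive joint probability, for every
`x ∈ S` we have
`P(Ŷ=1|Z=j) · P(X=x|Z=k) · P(X=x|Ŷ=1,Z=j) ≤ P(Ŷ=1|Z=k) · P(X=x|Z=j) · P(X=x|Ŷ=1,Z=k)`,
i.e. the one-sided statistical parity ratio `P(Ŷ=1|Z=j)/P(Ŷ=1|Z=k)` is bounded by the
infimum over `x ∈ S` of `(P(X=x|Z=j) P(X=x|Ŷ=1,Z=k)) / (P(X=x|Z=k) P(X=x|Ŷ=1,Z=j))`. -/
theorem binary_classifier_one_sided_statistical_parity_bound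
    {Ω 𝒳 𝒵 : Type*} [Fintype Ω] [Fintype 𝒳] [Fintype 𝒵]
    (P : Ω → ℝ) (hP0 : ∀ ω, 0 ≤ P ω) (hP1 : ∑ ω : Ω, P ω = 1)
    (X : Ω → 𝒳) (Z : Ω → 𝒵) (Yhat : Ω → Fin 2)
    (j k : 𝒵) (S : Finset 𝒳) (hS : S.Nonempty)
    (hposj : ∀ x ∈ S, 0 < pr P (fun ω => X ω = x ∧ Yhat ω = 1 ∧ Z ω = j))
    (hposk : ∀ x ∈ S, 0 < pr P (fun ω => X ω = x ∧ Yhat ω = 1 ∧ Z ω = k))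
    (hmono : ∀ x ∈ S,
      condPr P (fun ω => X ω = x ∧ Z ω = j) (fun ω => Yhat ω = 1)
        ≤ condPr P (fun ω => X ω = x ∧ Z ω = k) (fun ω => Yhat ω = 1)) :
    ∀ x ∈ S,
      condPr P (fun ω => Z ω = j) (fun ω => Yhat ω = 1)
          * condPr P (fun ω => Z ω = k) (fun ω => X ω = x)
          * condPr P (fun ω => Yhat ω = 1 ∧ Z ω = j) (fun ω => X ω = x)
        ≤ condPr P (fun ω => Z ω = k) (fun ω => Yhat ω = 1)
          * condPr P (fun ω => Z ω = j) (fun ω => X ω = x)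
          * condPr P (fun ω => Yhat ω = 1 ∧ Z ω = k) (fun ω => X ω = x) := by
  intro x hx
  have haj := hposj x hx
  have hak := hposk x hx
  set aj := pr P (fun ω => X ω = x ∧ Yhat ω = 1 ∧ Z ω = j) with haj_def
  set ak := pr P (fun ω => X ω = x ∧ Yhat ω = 1 ∧ Z ω = k) with hak_def
  set bj := pr P (fun ω => X ω = x ∧ Z ω = j) with hbj_def
  set bk := pr P (fun ω => X ω = x ∧ Z ω = k) with hbk_def
  set cj := pr P (fun ω => Yhat ω = 1 ∧ Z ω = j) with hcj_def
  set ck := pr P (fun ω => Yhat ω = 1 ∧ Z ω = k) with hck_def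
  set dj := pr P (fun ω => Z ω = j) with hdj_def
  set dk := pr P (fun ω => Z ω = k) with hdk_def
  have hbj : 0 < bj := lt_of_lt_of_le haj (pr_mono' P hP0 (fun ω h => ⟨h.1, h.2.2⟩))
  have hbk : 0 < bk := lt_of_lt_of_le hak (pr_mono' P hP0 (fun ω h => ⟨h.1, h.2.2⟩))
  have hcj : 0 < cj := lt_of_lt_of_le haj (pr_mono' P hP0 (fun ω h => h.2))
  have hck : 0 < ck := lt_of_lt_of_le hak (pr_mono' P hP0 (fun ω h => h.2))
  have hdj : 0 < dj := lt_of_lt_of_le hbj (pr_mono' P hP0 (fun ω h => h.2))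
  have hdk : 0 < dk := lt_of_lt_of_le hbk (pr_mono' P hP0 (fun ω h => h.2))
  have hmono' := hmono x hx
  unfold condPr at hmono' ⊢
  rw [pr_congr' P (A := fun ω => (X ω = x ∧ Z ω = j) ∧ Yhat ω = 1)
        (B := fun ω => X ω = x ∧ Yhat ω = 1 ∧ Z ω = j) (fun ω => by tauto),
      pr_congr' P (A := fun ω => (X ω = x ∧ Z ω = k) ∧ Yhat ω = 1)
        (B := fun ω => X ω = x ∧ Yhat ω = 1 ∧ Z ω = k) (fun ω => by tauto)] at hmono'
  rw [pr_congr' P (A := fun ω => Z ω = j ∧ Yhat ω = 1)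
        (B := fun ω => Yhat ω = 1 ∧ Z ω = j) (fun ω => by tauto),
      pr_congr' P (A := fun ω => Z ω = k ∧ Yhat ω = 1)
        (B := fun ω => Yhat ω = 1 ∧ Z ω = k) (fun ω => by tauto),
      pr_congr' P (A := fun ω => Z ω = j ∧ X ω = x)
        (B := fun ω => X ω = x ∧ Z ω = j) (fun ω => by tauto),
      pr_congr' P (A := fun ω => Z ω = k ∧ X ω = x)
        (B := fun ω => X ω = x ∧ Z ω = k) (fun ω => by tauto),
      pr_congr' P (A := fun ω => (Yhat ω = 1 ∧ Z ω = j) ∧ X ω = x)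
        (B := fun ω => X ω = x ∧ Yhat ω = 1 ∧ Z ω = j) (fun ω => by tauto),
      pr_congr' P (A := fun ω => (Yhat ω = 1 ∧ Z ω = k) ∧ X ω = x)
        (B := fun ω => X ω = x ∧ Yhat ω = 1 ∧ Z ω = k) (fun ω => by tauto)]
  -- goal: cj/dj * (bk/dk) * (aj/cj) ≤ ck/dk * (bj/dj) * (ak/ck)
  have key : aj * bk ≤ ak * bj := (div_le_div_iff₀ hbj hbk).mp hmono'
  have e1 : cj / dj * (bk / dk) * (aj / cj) = aj * bk / (dj * dk) := by
    field_simp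
  have e2 : ck / dk * (bj / dj) * (ak / ck) = ak * bj / (dj * dk) := by
    field_simp
  rw [e1, e2]
  gcongr
end

section
/- There exist a finite set 𝒳 ⊆ ℝ (of feature values, e.g., heights), two groups labeled j and k, a conditional probability assignment p : 𝒳 × {j,k} → [0,1] with Σ_{x ∈ 𝒳} p(x, z) = 1 for z ∈ {j,k} and p(x, j) = p(x, k) for all x (so the maximum likelihood ratio C equals 1), and a binary classifier given by conditional acceptance probabilities q : 𝒳 × {j,k} → [0,1], such that: (i) statistical parity holds, i.e., Σ_{x ∈ 𝒳} q(x, j) p(x, j) = Σ_{x ∈ 𝒳} q(x, k) p(x, k); and (ii) there is no constant C' > 0 such that q(x, j) ≤ C' · q(x, k) for all x ∈ 𝒳, and no constant C' > 0 such that q(x, k) ≤ C' · q(x, j) for all x ∈ 𝒳. Concretely, this holds when q(x, j) = 1 exactly for x above a threshold h and q(x, k) = 1 exactly for x below h, with the two halves having equal probability mass. -/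
/-- Statistical parity does not imply any bound on monotonicity violations: there exist a
finite set `𝒳 ⊆ ℝ` of feature values, identical conditional feature distributions for
the two groups `j` and `k` (`pj = pk`, so the maximum likelihood ratio is `C = 1`), and
conditional acceptance probabilities `qj, qk` of a binary classifier
(`q z x = P(Ŷ = 1 | X = x, Z = z)`) such that (i) statistical parity holds
(`∑ x, qj x * pj x = ∑ x, qk x * pk x`, i.e. equal group acceptance rates), yet (ii) no
constant `C' > 0` satisfies `qj x ≤ C' * qk x` for all `x ∈ 𝒳`, nor `qk x ≤ C' * qj x`
for all `x ∈ 𝒳`.  Concretely this is realized by a threshold `h`: `qj x = 1` exactly for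
`x` above `h`, `qk x = 1` exactly for `x` below `h`, with the two halves carrying equal
probability mass. -/
theorem statistical_parity_does_not_bound_monotonicity_violation :
    ∃ (𝒳 : Finset ℝ) (pj pk qj qk : ℝ → ℝ),
      𝒳.Nonempty ∧
      (∀ x ∈ 𝒳, 0 ≤ pj x ∧ pj x ≤ 1) ∧
      (∀ x ∈ 𝒳, 0 ≤ pk x ∧ pk x ≤ 1) ∧
      (∑ x ∈ 𝒳, pj x = 1) ∧
      (∑ x ∈ 𝒳, pk x = 1) ∧
      (∀ x ∈ 𝒳, pj x = pk x) ∧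
      (∀ x ∈ 𝒳, 0 ≤ qj x ∧ qj x ≤ 1) ∧
      (∀ x ∈ 𝒳, 0 ≤ qk x ∧ qk x ≤ 1) ∧
      (∑ x ∈ 𝒳, qj x * pj x = ∑ x ∈ 𝒳, qk x * pk x) ∧
      (¬ ∃ C' : ℝ, 0 < C' ∧ ∀ x ∈ 𝒳, qj x ≤ C' * qk x) ∧
      (¬ ∃ C' : ℝ, 0 < C' ∧ ∀ x ∈ 𝒳, qk x ≤ C' * qj x) ∧
      (∃ h : ℝ,
        (∀ x ∈ 𝒳, qj x = if h < x then 1 else 0) ∧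
        (∀ x ∈ 𝒳, qk x = if x < h then 1 else 0) ∧
        (∑ x ∈ 𝒳, if h < x then pj x else 0)
          = ∑ x ∈ 𝒳, if x < h then pk x else 0) := by
  refine ⟨{0, 1}, fun _ => 1/2, fun _ => 1/2,
    fun x => if (1/2:ℝ) < x then 1 else 0, fun x => if x < (1/2:ℝ) then 1 else 0,
    ⟨0, by norm_num⟩, ?_, ?_, ?_, ?_, ?_, ?_, ?_, ?_, ?_, ?_, ⟨1/2, ?_, ?_, ?_⟩⟩
  · intro x _; norm_num
  · intro x _; norm_num
  · norm_num
  · norm_num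
  · intro x _; rfl
  · intro x _; dsimp only; split <;> norm_num
  · intro x _; dsimp only; split <;> norm_num
  · norm_num
  · rintro ⟨C, hC, hall⟩
    have := hall 1 (by norm_num)
    norm_num at this
  · rintro ⟨C, hC, hall⟩
    have := hall 0 (by norm_num)
    norm_num at this
  · intro x _; rfl
  · intro x _; rfl
  · norm_num
end

section
/- There exist finite sets 𝒳 and 𝒵 ⊆ ℝ with |𝒵| > 2, a function f : 𝒳 × 𝒵 → ℝ, a conditional probability assignment p : 𝒳 × 𝒵 → [0,1] with Σ_{x ∈ 𝒳} p(x, z) = 1 for each z, and a pair j < k in 𝒵, such that if f̃ denotes the minimizer of Σ_{x,z} (f(x,z) − f'(x,z))² over all f' : 𝒳 × 𝒵 → ℝ satisfying f'(x, a) ≤ f'(x, b) for all x ∈ 𝒳 and all a ≤ b in 𝒵, then E[f̃(X,Z) | Z = j] − E[f̃(X,Z) | Z = k] > E[f(X,Z) | Z = j] − E[f(X,Z) | Z = k] > 0, where E[g(X,Z) | Z = z] = Σ_{x ∈ 𝒳} g(x, z) p(x, z). In particular, one may take 𝒳 = {0,1} and 𝒵 = {0,1,2,3}, with the projection's violation between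 z = 1 and z = 2 equal to 1.2 while the original model's violation equals 0.85. -/
/-- Monotonic projection can be more unfair in the worst case: with `𝒳 = {0,1}` and
`𝒵 = {0,1,2,3} ⊆ ℝ` (so `|𝒵| > 2`), there exist a model `f`, conditional probabilities
`p x z = P(X = x | Z = z)` summing to one for each `z`, and a least-squares projection
`ftil` of `f` onto the functions monotonically nondecreasing in the second argument on
`𝒵`, such that for the pair `j = 1 < 2 = k` the one-sided statistical parity violation
of the projection strictly exceeds that of the original model, which is itself positive:
the projection's violation equals `1.2` while the original model's equals `0.85`.  Here
`E[g(X,Z) | Z = z] = ∑ x, g x z * p x z`. -/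
theorem monotone_projection_can_worsen_pairwise_parity_violation :
    ∃ f ftil p : ℝ → ℝ → ℝ,
      (∀ x ∈ ({0, 1} : Finset ℝ), ∀ z ∈ ({0, 1, 2, 3} : Finset ℝ),
        0 ≤ p x z ∧ p x z ≤ 1) ∧
      (∀ z ∈ ({0, 1, 2, 3} : Finset ℝ), ∑ x ∈ ({0, 1} : Finset ℝ), p x z = 1) ∧
      (∀ x ∈ ({0, 1} : Finset ℝ), ∀ a ∈ ({0, 1, 2, 3} : Finset ℝ),
        ∀ b ∈ ({0, 1, 2, 3} : Finset ℝ), a ≤ b → ftil x a ≤ ftil x b) ∧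
      (∀ g : ℝ → ℝ → ℝ,
        (∀ x ∈ ({0, 1} : Finset ℝ), ∀ a ∈ ({0, 1, 2, 3} : Finset ℝ),
          ∀ b ∈ ({0, 1, 2, 3} : Finset ℝ), a ≤ b → g x a ≤ g x b) →
        (∑ x ∈ ({0, 1} : Finset ℝ), ∑ z ∈ ({0, 1, 2, 3} : Finset ℝ),
            (f x z - ftil x z) ^ 2)
          ≤ ∑ x ∈ ({0, 1} : Finset ℝ), ∑ z ∈ ({0, 1, 2, 3} : Finset ℝ),
            (f x z - g x z) ^ 2) ∧
      ((∑ x ∈ ({0, 1} : Finset ℝ), ftil x 1 * p x 1)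
          - (∑ x ∈ ({0, 1} : Finset ℝ), ftil x 2 * p x 2)
        > (∑ x ∈ ({0, 1} : Finset ℝ), f x 1 * p x 1)
          - (∑ x ∈ ({0, 1} : Finset ℝ), f x 2 * p x 2)) ∧
      ((∑ x ∈ ({0, 1} : Finset ℝ), f x 1 * p x 1)
          - (∑ x ∈ ({0, 1} : Finset ℝ), f x 2 * p x 2) > 0) ∧
      ((∑ x ∈ ({0, 1} : Finset ℝ), ftil x 1 * p x 1)
          - (∑ x ∈ ({0, 1} : Finset ℝ), ftil x 2 * p x 2) = 1.2) ∧
      ((∑ x ∈ ({0, 1} : Finset ℝ), f x 1 * p x 1)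
          - (∑ x ∈ ({0, 1} : Finset ℝ), f x 2 * p x 2) = 0.85) := by
  refine ⟨fun x z => if x = 0 then (if z ≤ 0 then 0 else 1.85)
            else (if z = 2 then 1 else if z = 3 then 0.3 else 0),
          fun x z => if x = 0 then (if z ≤ 0 then 0 else 1.85)
            else (if z ≤ 1 then 0 else 0.65),
          fun x z => if z = 2 then (if x = 0 then 0 else 1)
            else (if x = 0 then 1 else 0),
          ?_, ?_, ?_, ?_, ?_, ?_, ?_, ?_⟩
  · intro x hx z hz
    simp only [Finset.mem_insert, Finset.mem_singleton] at hx hz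
    rcases hx with rfl | rfl <;> rcases hz with rfl | rfl | rfl | rfl <;> norm_num
  · intro z hz
    simp only [Finset.mem_insert, Finset.mem_singleton] at hz
    rcases hz with rfl | rfl | rfl | rfl <;> norm_num [Finset.sum_insert, Finset.mem_insert]
  · intro x hx a ha b hb hab
    simp only [Finset.mem_insert, Finset.mem_singleton] at hx ha hb
    rcases hx with rfl | rfl <;> rcases ha with rfl | rfl | rfl | rfl <;>
      rcases hb with rfl | rfl | rfl | rfl <;> (revert hab; norm_num)
  · intro g hg
    have h23 : g 1 2 ≤ g 1 3 := hg 1 (by norm_num) 2 (by norm_num) 3 (by norm_num) (by norm_num)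
    norm_num [Finset.sum_insert, Finset.mem_insert]
    nlinarith [sq_nonneg (g 0 0), sq_nonneg (1.85 - g 0 1), sq_nonneg (1.85 - g 0 2),
      sq_nonneg (1.85 - g 0 3), sq_nonneg (g 1 0), sq_nonneg (g 1 1),
      sq_nonneg (g 1 2 - 0.65), sq_nonneg (g 1 3 - 0.65)]
  · norm_num [Finset.sum_insert, Finset.mem_insert]
  · norm_num [Finset.sum_insert, Finset.mem_insert]
  · norm_num [Finset.sum_insert, Finset.mem_insert]
  · norm_num [Finset.sum_insert, Finset.mem_insert]
end
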